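/- As an identity of formal power series in z, (Σ_{n=0}^∞ p₂(n) z^n) · (Σ_{k∈ℤ} (−1)^k z^{k²}) = Σ_{n=0}^∞ p(n) z^{2n}, where Σ_{k∈ℤ} (−1)^k z^{k²} = 1 + 2Σ_{k≥1} (−1)^k z^{k²}. -/

import Mathlib

/-- The partition number `p(n)`: the number of partitions of `n`. -/
noncomputable def partitionNumber (n : ℕ) : ℕ := Nat.card (Nat.Partition n)

/-- The bipartition number `p₂(n)`: the number of ordered pairs `(λ, μ)` of partitions
with `|λ| + |μ| = n`. -/
noncomputable def bipartitionNumber (n : ℕ) : ℕ :=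
  Nat.card {x : (Σ a : ℕ, Nat.Partition a) × (Σ b : ℕ, Nat.Partition b) // x.1.1 + x.2.1 = n}

/-- The theta series `∑_{k ∈ ℤ} (-1)^k z^(k²) = 1 + 2 ∑_{k ≥ 1} (-1)^k z^(k²)` as a formal
power series over `ℤ`: its `m`-th coefficient is `1` for `m = 0`, `2·(-1)^k` if `m = k²` with
`k ≥ 1`, and `0` otherwise. -/
noncomputable def thetaAlt : PowerSeries ℤ :=
  PowerSeries.mk fun m =>
    if m = 0 then 1 else if Nat.sqrt m ^ 2 = m then 2 * (-1 : ℤ) ^ Nat.sqrt m else 0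

open PowerSeries Finset
noncomputable section

namespace GaussAux

/-- congruence mod X^M -/
def ME (M : ℕ) (A B : PowerSeries ℤ) : Prop := (X : PowerSeries ℤ) ^ M ∣ A - B

theorem ME.refl (M : ℕ) (A : PowerSeries ℤ) : ME M A A := by simp [ME]

theorem ME.symm {M A B} (h : ME M A B) : ME M B A := by
  simpa [ME, neg_sub] using (dvd_neg.2 h)

theorem ME.trans {M A B C} (h1 : ME M A B) (h2 : ME M B C) : ME M A C := by
  have := dvd_add h1 h2; simpa [ME] using this

theorem ME.mono {M M' A B} (h : ME M A B) (hle : M' ≤ M) : ME M' A B :=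
  dvd_trans (pow_dvd_pow _ hle) h

theorem ME.mul {M A B C D} (h1 : ME M A B) (h2 : ME M C D) : ME M (A * C) (B * D) := by
  have : A * C - B * D = (A - B) * C + B * (C - D) := by ring
  rw [ME, this]
  exact dvd_add (h1.mul_right _) (h2.mul_left _)

theorem ME.coeff_eq {M A B} (h : ME M A B) {m : ℕ} (hm : m < M) :
    PowerSeries.coeff m A = PowerSeries.coeff m B := by
  rw [ME, PowerSeries.X_pow_dvd_iff] at h
  have := h m hm
  rw [map_sub, sub_eq_zero] at this
  exact this

theorem ME.of_coeff {M : ℕ} {A B : PowerSeries ℤ}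
    (h : ∀ m < M, PowerSeries.coeff m A = PowerSeries.coeff m B) : ME M A B := by
  rw [ME, PowerSeries.X_pow_dvd_iff]
  intro m hm; rw [map_sub, sub_eq_zero]; exact h m hm

theorem ME.cancel_unit {M : ℕ} {A B U : PowerSeries ℤ} (hU : IsUnit U)
    (h : ME M (A * U) (B * U)) : ME M A B := by
  obtain ⟨u, rfl⟩ := hU
  have : A - B = (A * u - B * u) * (u⁻¹ : (PowerSeries ℤ)ˣ) := by
    rw [sub_mul]
    simp [mul_assoc, ← Units.val_mul]
  rw [ME, this]
  exact Dvd.dvd.mul_right h _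

theorem ME.prod_one {M : ℕ} {ι : Type*} (s : Finset ι) (f : ι → PowerSeries ℤ)
    (h : ∀ i ∈ s, ME M (f i) 1) : ME M (∏ i ∈ s, f i) 1 := by
  classical
  induction s using Finset.induction with
  | empty => simpa using ME.refl M 1
  | insert _ _ hx ih =>
    rename_i a s
    rw [Finset.prod_insert hx]
    have := (h a (Finset.mem_insert_self a s)).mul
      (ih (fun i hi => h i (Finset.mem_insert_of_mem hi)))
    simpa using this

theorem ME.X_pow_dvd {M a : ℕ} (h : M ≤ a) (C : PowerSeries ℤ) :
    ME M ((X : PowerSeries ℤ) ^ a * C) 0 := by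
  rw [ME, sub_zero]
  exact Dvd.dvd.mul_right (pow_dvd_pow _ h) _

end GaussAux

namespace GaussAux

/-- substitution X -> X^2 -/
def dbl (f : PowerSeries ℤ) : PowerSeries ℤ :=
  PowerSeries.mk fun m => if 2 ∣ m then PowerSeries.coeff (m / 2) f else 0

theorem coeff_dbl (f : PowerSeries ℤ) (m : ℕ) :
    PowerSeries.coeff m (dbl f) = if 2 ∣ m then PowerSeries.coeff (m / 2) f else 0 :=
  PowerSeries.coeff_mk _ _

theorem dbl_one : dbl 1 = 1 := by
  ext m
  rw [coeff_dbl]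
  simp only [PowerSeries.coeff_one]
  split_ifs <;> first | rfl | omega

theorem dbl_sub (f g : PowerSeries ℤ) : dbl (f - g) = dbl f - dbl g := by
  ext m
  simp only [coeff_dbl, map_sub]
  split_ifs <;> simp

/-- doubling embedding for pairs -/
def dblEmb : ℕ × ℕ ↪ ℕ × ℕ :=
  ⟨fun p => (2 * p.1, 2 * p.2), by
    intro a b h
    simp only [Prod.mk.injEq] at h
    exact Prod.ext (by omega) (by omega)⟩

theorem dbl_mul (f g : PowerSeries ℤ) : dbl (f * g) = dbl f * dbl g := by
  ext m
  rw [coeff_dbl]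
  by_cases hm : 2 ∣ m
  · rw [if_pos hm, PowerSeries.coeff_mul, PowerSeries.coeff_mul]
    rw [show Finset.HasAntidiagonal.antidiagonal m = ((Finset.HasAntidiagonal.antidiagonal (m/2)).map dblEmb) ∪
        ((Finset.HasAntidiagonal.antidiagonal m).filter fun p => ¬ (2 ∣ p.1 ∧ 2 ∣ p.2)) from ?_]
    · rw [Finset.sum_union, Finset.sum_map]
      · have h2 : ∑ p ∈ (Finset.HasAntidiagonal.antidiagonal m).filter fun p => ¬ (2 ∣ p.1 ∧ 2 ∣ p.2),
            (PowerSeries.coeff p.1) (dbl f) * (PowerSeries.coeff p.2) (dbl g) = 0 := by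
          apply Finset.sum_eq_zero
          intro p hp
          simp only [Finset.mem_filter, Finset.HasAntidiagonal.mem_antidiagonal, not_and_or] at hp
          rcases hp.2 with h | h
          · rw [coeff_dbl, if_neg h, zero_mul]
          · rw [coeff_dbl g, if_neg h, mul_zero]
        rw [h2, add_zero]
        apply Finset.sum_congr rfl
        intro p hp
        simp only [Finset.HasAntidiagonal.mem_antidiagonal] at hp
        rw [show dblEmb p = (2 * p.1, 2 * p.2) from rfl]
        rw [coeff_dbl, coeff_dbl, if_pos ⟨p.1, rfl⟩, if_pos ⟨p.2, rfl⟩,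
          Nat.mul_div_cancel_left _ (by norm_num : 0 < 2),
          Nat.mul_div_cancel_left _ (by norm_num : 0 < 2)]
      · rw [Finset.disjoint_left]
        rintro ⟨a, b⟩ hab hab'
        simp only [Finset.mem_map, Finset.HasAntidiagonal.mem_antidiagonal, dblEmb,
          Function.Embedding.coeFn_mk, Prod.mk.injEq, Prod.ext_iff] at hab
        simp only [Finset.mem_filter, not_and_or] at hab'
        obtain ⟨⟨u, v⟩, _, h1, h2⟩ := hab
        rcases hab'.2 with h | h <;> [exact h ⟨u, h1.symm⟩; exact h ⟨v, h2.symm⟩]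
    · ext ⟨a, b⟩
      simp only [Finset.mem_union, Finset.mem_map, Finset.HasAntidiagonal.mem_antidiagonal, Finset.mem_filter,
        show ∀ q, dblEmb q = (2 * q.1, 2 * q.2) from fun _ => rfl, Function.Embedding.coeFn_mk, Prod.ext_iff]
      constructor
      · intro hab
        by_cases h2 : 2 ∣ a ∧ 2 ∣ b
        · left
          exact ⟨(a/2, b/2), by omega, by simp; omega⟩
        · right; exact ⟨hab, h2⟩
      · rintro (⟨⟨u, v⟩, huv, h1, h2⟩ | ⟨h, _⟩)
        · simp only [Finset.HasAntidiagonal.mem_antidiagonal] at huv; omega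
        · exact h
  · rw [if_neg hm, PowerSeries.coeff_mul]
    symm
    apply Finset.sum_eq_zero
    intro p hp
    simp only [Finset.HasAntidiagonal.mem_antidiagonal] at hp
    by_cases h1 : 2 ∣ p.1
    · rw [coeff_dbl g, if_neg (by omega), mul_zero]
    · rw [coeff_dbl f, if_neg h1, zero_mul]

theorem dbl_X_pow (d : ℕ) : dbl ((X : PowerSeries ℤ) ^ d) = X ^ (2 * d) := by
  ext m
  rw [coeff_dbl]
  simp only [PowerSeries.coeff_X_pow]
  split_ifs <;> first | rfl | omega

theorem dbl_one_sub_X_pow (d : ℕ) :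
    dbl (1 - (X : PowerSeries ℤ) ^ d) = 1 - X ^ (2 * d) := by
  rw [dbl_sub, dbl_one, dbl_X_pow]

theorem dbl_dvd {M : ℕ} {A : PowerSeries ℤ} (h : (X : PowerSeries ℤ) ^ M ∣ A) :
    (X : PowerSeries ℤ) ^ (2 * M) ∣ dbl A := by
  rw [PowerSeries.X_pow_dvd_iff] at h ⊢
  intro m hm
  rw [coeff_dbl]
  split_ifs with h2
  · exact h _ (by omega)
  · rfl

theorem ME.dbl_of {M : ℕ} {A B : PowerSeries ℤ} (h : ME M A B) : ME (2 * M) (dbl A) (dbl B) := by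
  rw [ME, ← dbl_sub]
  exact dbl_dvd h

end GaussAux

namespace GaussAux
open scoped Classical

/-- A convenience constructor for the power series whose coefficients indicate a subset. -/
def indicatorSeries (α : Type*) [Semiring α] (s : Set ℕ) : PowerSeries α :=
  PowerSeries.mk fun n => if n ∈ s then 1 else 0

theorem coeff_indicator {α : Type*} (s : Set ℕ) [Semiring α] (n : ℕ) :
    coeff n (indicatorSeries α s) = if n ∈ s then 1 else 0 :=
  coeff_mk _ _

-- The main workhorse (copied from Archive.Wiedijk100Theorems.Partition).
theorem partialGF_prop (α : Type*) [CommSemiring α] (n : ℕ) (s : Finset ℕ) (hs : ∀ i ∈ s, 0 < i)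
    (c : ℕ → Set ℕ) (hc : ∀ i, i ∉ s → 0 ∈ c i) :
    #{p : n.Partition | (∀ j, p.parts.count j ∈ c j) ∧ ∀ j ∈ p.parts, j ∈ s} =
      coeff n (∏ i ∈ s, indicatorSeries α ((· * i) '' c i)) := by
  simp_rw [coeff_prod, coeff_indicator, prod_boole, sum_boole]
  apply congr_arg
  simp only [mem_univ, forall_true_left, not_and, not_forall, exists_prop,
    Set.mem_image, not_exists]
  set φ : (a : Nat.Partition n) →
    a ∈ filter (fun p ↦ (∀ (j : ℕ), Multiset.count j p.parts ∈ c j) ∧ ∀ j ∈ p.parts, j ∈ s) univ →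
    ℕ →₀ ℕ := fun p _ => {
      toFun := fun i => Multiset.count i p.parts • i
      support := Finset.filter (fun i => i ≠ 0) p.parts.toFinset
      mem_support_toFun := fun a => by
        simp only [smul_eq_mul, ne_eq, mul_eq_zero, Multiset.count_eq_zero]
        rw [not_or, not_not]
        simp only [Multiset.mem_toFinset, not_not, mem_filter] }
  refine Finset.card_bij φ ?_ ?_ ?_
  · intro a ha
    simp only [φ, not_forall, not_exists, not_and, exists_prop, mem_filter]
    rw [mem_finsuppAntidiag]
    dsimp only [ne_eq, smul_eq_mul, id_eq, eq_mpr_eq_cast, le_eq_subset, Finsupp.coe_mk]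
    simp only [mem_univ, forall_true_left, not_and, not_forall, exists_prop,
      mem_filter, true_and] at ha
    refine ⟨⟨?_, fun i ↦ ?_⟩, fun i _ ↦ ⟨a.parts.count i, ha.1 i, rfl⟩⟩
    · conv_rhs => simp [← a.parts_sum]
      rw [sum_multiset_count_of_subset _ s]
      · simp only [smul_eq_mul]
      · intro i
        simp only [Multiset.mem_toFinset, not_not, mem_filter]
        apply ha.2
    · simp only [ne_eq, Multiset.mem_toFinset, not_not, mem_filter, and_imp]
      exact fun hi _ ↦ ha.2 i hi
  · intro p₁ hp₁ p₂ hp₂ h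
    apply Nat.Partition.ext
    simp only [true_and, mem_univ, mem_filter] at hp₁ hp₂
    ext i
    simp only [φ, ne_eq, Multiset.mem_toFinset, not_not, smul_eq_mul, Finsupp.mk.injEq] at h
    by_cases hi : i = 0
    · rw [hi]
      rw [Multiset.count_eq_zero_of_notMem]
      · rw [Multiset.count_eq_zero_of_notMem]
        intro a; exact Nat.lt_irrefl 0 (hs 0 (hp₂.2 0 a))
      intro a; exact Nat.lt_irrefl 0 (hs 0 (hp₁.2 0 a))
    · rw [← mul_left_inj' hi]
      rw [funext_iff] at h
      exact h.2 i
  · simp only [φ, mem_filter, mem_finsuppAntidiag, mem_univ, exists_prop, true_and, and_assoc]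
    rintro f ⟨hf, hf₃, hf₄⟩
    have hf' : f ∈ finsuppAntidiag s n := mem_finsuppAntidiag.mpr ⟨hf, hf₃⟩
    simp only [mem_finsuppAntidiag] at hf'
    refine ⟨⟨∑ i ∈ s, Multiset.replicate (f i / i) i, ?_, ?_⟩, ?_, ?_, ?_⟩
    · intro i hi
      simp only [exists_prop, Multiset.mem_sum, mem_map, Function.Embedding.coeFn_mk] at hi
      rcases hi with ⟨t, ht, z⟩
      apply hs
      rwa [Multiset.eq_of_mem_replicate z]
    · simp_rw [Multiset.sum_sum, Multiset.sum_replicate, Nat.nsmul_eq_mul]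
      rw [← hf'.1]
      refine sum_congr rfl fun i hi => Nat.div_mul_cancel ?_
      rcases hf₄ i hi with ⟨w, _, hw₂⟩
      rw [← hw₂]
      exact dvd_mul_left _ _
    · intro i
      simp_rw [Multiset.count_sum', Multiset.count_replicate, sum_ite_eq']
      split_ifs with h
      · rcases hf₄ i h with ⟨w, hw₁, hw₂⟩
        rwa [← hw₂, Nat.mul_div_cancel _ (hs i h)]
      · exact hc _ h
    · intro i hi
      rw [Multiset.mem_sum] at hi
      rcases hi with ⟨j, hj₁, hj₂⟩
      rwa [Multiset.eq_of_mem_replicate hj₂]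
    · ext i
      simp_rw [Multiset.count_sum', Multiset.count_replicate, sum_ite_eq']
      simp only [ne_eq, Multiset.mem_toFinset, not_not, smul_eq_mul, ite_mul,
        zero_mul, Finsupp.coe_mk]
      split_ifs with h
      · apply Nat.div_mul_cancel
        rcases hf₄ i h with ⟨w, _, hw₂⟩
        apply Dvd.intro_left _ hw₂
      · apply symm
        rw [← Finsupp.notMem_support_iff]
        exact notMem_mono hf'.2 h

end GaussAux

namespace GaussAux

/-- geometric series in X^d -/
def geom (d : ℕ) : PowerSeries ℤ := indicatorSeries ℤ {k | d ∣ k}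

theorem coeff_geom (d m : ℕ) :
    PowerSeries.coeff m (geom d) = if d ∣ m then 1 else 0 := by
  rw [geom, coeff_indicator]
  simp [Set.mem_setOf_eq]

theorem geom_mul (d : ℕ) (hd : 0 < d) : (1 - (X : PowerSeries ℤ) ^ d) * geom d = 1 := by
  ext m
  rw [sub_mul, one_mul, map_sub, mul_comm ((X : PowerSeries ℤ) ^ d),
    PowerSeries.coeff_mul_X_pow', PowerSeries.coeff_one, coeff_geom]
  by_cases hdm : d ≤ m
  · rw [if_pos hdm, coeff_geom]
    have hiff : d ∣ m ↔ d ∣ m - d := by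
      constructor
      · intro h; exact Nat.dvd_sub h dvd_rfl
      · intro h
        have hm : m = m - d + d := by omega
        rw [hm]; exact dvd_add h dvd_rfl
    rw [if_neg (by omega : ¬ m = 0)]
    by_cases h1 : d ∣ m
    · rw [if_pos h1, if_pos (hiff.1 h1)]; ring
    · rw [if_neg h1, if_neg (fun h => h1 (hiff.2 h))]; ring
  · rw [if_neg hdm, sub_zero]
    by_cases hm : m = 0
    · subst hm; rw [if_pos (dvd_zero d), if_pos rfl]
    · rw [if_neg hm, if_neg]
      intro h1
      have := Nat.le_of_dvd (by omega) h1
      omega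

def Pp (n : ℕ) : PowerSeries ℤ := ∏ i ∈ range n, geom (i + 1)

def Fp (n : ℕ) : PowerSeries ℤ := ∏ i ∈ range n, (1 - (X : PowerSeries ℤ) ^ (i + 1))

theorem Fp_mul_Pp (n : ℕ) : Fp n * Pp n = 1 := by
  rw [Fp, Pp, ← Finset.prod_mul_distrib]
  rw [Finset.prod_eq_one]
  intro i _
  exact geom_mul _ (Nat.succ_pos i)

theorem coeff_Pp {n m : ℕ} (h : m ≤ n) :
    PowerSeries.coeff m (Pp n) = (partitionNumber m : ℤ) := by
  classical
  have key := partialGF_prop ℤ m ((range n).map ⟨Nat.succ, Nat.succ_injective⟩)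
    (fun i hi => by
      simp only [Finset.mem_map, Function.Embedding.coeFn_mk] at hi
      obtain ⟨a, -, rfl⟩ := hi; exact Nat.succ_pos a)
    (fun _ => Set.univ) (fun _ _ => trivial)
  have h1 : ∏ i ∈ (range n).map ⟨Nat.succ, Nat.succ_injective⟩,
      indicatorSeries ℤ ((· * i) '' Set.univ) = Pp n := by
    rw [Finset.prod_map, Pp]
    apply Finset.prod_congr rfl
    intro i _
    rw [geom]
    apply congr_arg (indicatorSeries ℤ)
    ext k
    simp only [Set.mem_image, Set.mem_univ, true_and, Set.mem_setOf_eq,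
      Function.Embedding.coeFn_mk]
    constructor
    · rintro ⟨a, rfl⟩; exact Dvd.intro_left a rfl
    · rintro ⟨a, rfl⟩; exact ⟨a, mul_comm _ _⟩
  rw [h1] at key
  rw [← key]
  rw [Finset.filter_true_of_mem, Finset.card_univ]
  · rw [partitionNumber, Nat.card_eq_fintype_card]
  · intro p _
    refine ⟨fun _ => trivial, fun j hj => ?_⟩
    simp only [Finset.mem_map, Finset.mem_range, Function.Embedding.coeFn_mk]
    have hj1 : 0 < j := p.parts_pos hj
    have hj2 : j ≤ m := by
      have := Multiset.single_le_sum (fun _ _ => Nat.zero_le _) _ hj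
      simpa [p.parts_sum] using this
    exact ⟨j - 1, by omega, by omega⟩

end GaussAux

namespace GaussAux

theorem dbl_prod {ι : Type*} (s : Finset ι) (f : ι → PowerSeries ℤ) :
    dbl (∏ i ∈ s, f i) = ∏ i ∈ s, dbl (f i) := by
  classical
  induction s using Finset.induction with
  | empty => simpa using dbl_one
  | insert _ _ hx ih =>
    rename_i a s
    rw [Finset.prod_insert hx, Finset.prod_insert hx, dbl_mul, ih]

/-- The partition generating series. -/
def Sp : PowerSeries ℤ := PowerSeries.mk fun n => (partitionNumber n : ℤ)

/-- products with q^2 -/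
def Ep (n : ℕ) : PowerSeries ℤ := ∏ i ∈ range n, (1 - (X : PowerSeries ℤ) ^ (2 * (i + 1)))

theorem dbl_Fp (n : ℕ) : dbl (Fp n) = Ep n := by
  rw [Fp, Ep, dbl_prod]
  exact Finset.prod_congr rfl fun i _ => dbl_one_sub_X_pow _

theorem Sp_ME_Pp (n : ℕ) : ME (n + 1) Sp (Pp n) := by
  apply ME.of_coeff
  intro m hm
  rw [coeff_Pp (by omega : m ≤ n), Sp, coeff_mk]

theorem dblSp_mul_Ep (n : ℕ) : ME (2 * n + 2) (dbl Sp * Ep n) 1 := by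
  have h1 : ME (2 * (n + 1)) (dbl Sp) (dbl (Pp n)) := (Sp_ME_Pp n).dbl_of
  have h2 := h1.mul (ME.refl (2 * (n + 1)) (Ep n))
  have h3 : dbl (Pp n) * Ep n = 1 := by
    rw [← dbl_Fp, ← dbl_mul, mul_comm, Fp_mul_Pp, dbl_one]
  rw [h3] at h2
  exact h2.mono (by omega)

theorem constantCoeff_Ep (n : ℕ) : PowerSeries.constantCoeff (Ep n) = 1 := by
  rw [Ep, map_prod]
  apply Finset.prod_eq_one
  intro i _
  rw [map_sub, map_one, map_pow, PowerSeries.constantCoeff_X]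
  simp

theorem isUnit_Ep (n : ℕ) : IsUnit (Ep n) := by
  rw [PowerSeries.isUnit_iff_constantCoeff, constantCoeff_Ep]
  exact isUnit_one

/-- bipartition equivalence -/
def bipartEquiv (n : ℕ) :
    {x : (Σ a : ℕ, Nat.Partition a) × (Σ b : ℕ, Nat.Partition b) // x.1.1 + x.2.1 = n} ≃
      Σ c : (Finset.HasAntidiagonal.antidiagonal n : Finset (ℕ × ℕ)),
        Nat.Partition c.1.1 × Nat.Partition c.1.2 where
  toFun x := ⟨⟨(x.1.1.1, x.1.2.1), Finset.HasAntidiagonal.mem_antidiagonal.mpr x.2⟩, (x.1.1.2, x.1.2.2)⟩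
  invFun y := ⟨⟨⟨y.1.1.1, y.2.1⟩, ⟨y.1.1.2, y.2.2⟩⟩, Finset.HasAntidiagonal.mem_antidiagonal.mp y.1.2⟩
  left_inv x := rfl
  right_inv y := rfl

theorem bipartitionNumber_eq (n : ℕ) :
    (bipartitionNumber n : ℤ) =
      ∑ p ∈ Finset.HasAntidiagonal.antidiagonal n, (partitionNumber p.1 : ℤ) * (partitionNumber p.2 : ℤ) := by
  rw [bipartitionNumber, Nat.card_congr (bipartEquiv n), Nat.card_eq_fintype_card,
    Fintype.card_sigma]
  push_cast
  rw [← Finset.sum_attach (Finset.HasAntidiagonal.antidiagonal n)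
    (fun p => (partitionNumber p.1 : ℤ) * (partitionNumber p.2 : ℤ))]
  apply Finset.sum_congr rfl
  intro p _
  rw [Fintype.card_prod, partitionNumber, partitionNumber,
    Nat.card_eq_fintype_card, Nat.card_eq_fintype_card]
  push_cast
  ring

theorem bipart_series_eq : (PowerSeries.mk fun n => (bipartitionNumber n : ℤ)) = Sp * Sp := by
  ext m
  rw [coeff_mk, PowerSeries.coeff_mul, bipartitionNumber_eq]
  apply Finset.sum_congr rfl
  intro p _
  rw [Sp, coeff_mk, coeff_mk]

theorem rhs_eq_dbl_Sp :
    (PowerSeries.mk fun m => if 2 ∣ m then (partitionNumber (m / 2) : ℤ) else 0) = dbl Sp := by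
  ext m
  rw [coeff_mk, coeff_dbl]
  split_ifs with h
  · rw [Sp, coeff_mk]
  · rfl

end GaussAux

namespace GaussAux

/-- Gaussian binomial with base Y -/
def gb (Y : PowerSeries ℤ) : ℕ → ℕ → PowerSeries ℤ
  | 0, 0 => 1
  | 0, _ + 1 => 0
  | _ + 1, 0 => 1
  | n + 1, k + 1 => gb Y n (k + 1) + Y ^ (n - k) * gb Y n k

variable (Y : PowerSeries ℤ)

theorem gb_zero_right (n : ℕ) : gb Y n 0 = 1 := by cases n <;> simp [gb]

theorem gb_eq_zero : ∀ {n k : ℕ}, n < k → gb Y n k = 0 := by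
  intro n
  induction n with
  | zero => intro k hk; match k, hk with | k + 1, _ => simp [gb]
  | succ n ih =>
    intro k hk
    match k, hk with
    | k + 1, hk =>
      rw [gb, ih (by omega), ih (by omega), mul_zero, add_zero]

theorem gb_pascal2 : ∀ n k : ℕ, gb Y (n + 1) (k + 1) = Y ^ (k + 1) * gb Y n (k + 1) + gb Y n k := by
  intro n
  induction n with
  | zero =>
    intro k
    cases k <;> simp [gb]
  | succ n ih =>
    intro k
    cases k with
    | zero =>
      have h1 : gb Y (n + 2) 1 = gb Y (n + 1) 1 + Y ^ (n + 1) := by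
        rw [gb, gb_zero_right, mul_one]
        norm_num
      have h2 : gb Y (n + 1) 1 = gb Y n 1 + Y ^ n := by
        rw [gb, gb_zero_right, mul_one]
        norm_num
      have h4 : gb Y n 1 + Y ^ n = Y * gb Y n 1 + 1 := by
        have h3 := ih 0
        rw [gb_zero_right, zero_add, pow_one, h2] at h3
        exact h3
      simp only [zero_add, pow_one, gb_zero_right]
      rw [h1, h2]
      linear_combination h4
    | succ k =>
      have hd : gb Y (n + 2) (k + 2) =
          gb Y (n + 1) (k + 2) + Y ^ (n - k) * gb Y (n + 1) (k + 1) := by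
        rw [gb, Nat.succ_sub_succ]
      have hd2 : gb Y (n + 1) (k + 2) = gb Y n (k + 2) + Y ^ (n - (k + 1)) * gb Y n (k + 1) := by
        rw [gb]
      have hd3 : gb Y (n + 1) (k + 1) = gb Y n (k + 1) + Y ^ (n - k) * gb Y n k := by
        rw [gb]
      by_cases hk : k + 1 ≤ n
      · have he2 : (Y : PowerSeries ℤ) ^ (n - k) * Y ^ (k + 1) = Y ^ (k + 2) * Y ^ (n - (k + 1)) := by
          rw [← pow_add, ← pow_add]
          congr 1
          omega
        calc gb Y (n + 2) (k + 2)
            = gb Y (n + 1) (k + 2) + Y ^ (n - k) * gb Y (n + 1) (k + 1) := hd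
          _ = (Y ^ (k + 2) * gb Y n (k + 2) + gb Y n (k + 1)) +
              Y ^ (n - k) * (Y ^ (k + 1) * gb Y n (k + 1) + gb Y n k) := by
                rw [ih (k + 1), ih k]
          _ = Y ^ (k + 1 + 1) * (gb Y n (k + 2) + Y ^ (n - (k + 1)) * gb Y n (k + 1)) +
              (gb Y n (k + 1) + Y ^ (n - k) * gb Y n k) := by
                linear_combination gb Y n (k + 1) * he2
          _ = Y ^ (k + 1 + 1) * gb Y (n + 1) (k + 2) + gb Y (n + 1) (k + 1) := by
                rw [hd2, hd3]
      · calc gb Y (n + 2) (k + 2)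
            = gb Y (n + 1) (k + 2) + Y ^ (n - k) * gb Y (n + 1) (k + 1) := hd
          _ = (Y ^ (k + 2) * gb Y n (k + 2) + gb Y n (k + 1)) +
              Y ^ (n - k) * (Y ^ (k + 1) * gb Y n (k + 1) + gb Y n k) := by
                rw [ih (k + 1), ih k]
          _ = Y ^ (k + 1 + 1) * (gb Y n (k + 2) + Y ^ (n - (k + 1)) * gb Y n (k + 1)) +
              (gb Y n (k + 1) + Y ^ (n - k) * gb Y n k) := by
                rw [gb_eq_zero Y (show n < k + 1 by omega), gb_eq_zero Y (show n < k + 2 by omega)]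
                ring
          _ = Y ^ (k + 1 + 1) * gb Y (n + 1) (k + 2) + gb Y (n + 1) (k + 1) := by
                rw [hd2, hd3]

theorem gb_one_mul (n : ℕ) : (1 - Y) * gb Y n 1 = 1 - Y ^ n := by
  induction n with
  | zero => simp [gb]
  | succ n ih =>
    have h2 : gb Y (n + 1) 1 = gb Y n 1 + Y ^ n := by
      rw [gb, gb_zero_right, mul_one]
      norm_num
    rw [h2, mul_add, ih, pow_succ]
    ring

theorem gb_one_expand (hY : (1 : PowerSeries ℤ) - Y ≠ 0) (m : ℕ) :
    gb Y (m + 2) 1 = 1 + Y * gb Y m 1 + Y ^ (m + 1) := by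
  apply mul_left_cancel₀ hY
  rw [gb_one_mul]
  have h1 : (1 - Y) * (Y * gb Y m 1) = Y * ((1 - Y) * gb Y m 1) := by ring
  rw [mul_add, mul_add, h1, gb_one_mul]
  ring

/-- partial products in base Y -/
def EtY (j : ℕ) : PowerSeries ℤ := ∏ i ∈ range j, (1 - Y ^ (i + 1))

theorem gb_mul_EtY : ∀ N : ℕ, ∀ j ≤ N,
    gb Y N j * EtY Y j = ∏ i ∈ range j, (1 - Y ^ (N - j + i + 1)) := by
  intro N
  induction N with
  | zero =>
    intro j hj
    interval_cases j
    simp [gb, EtY]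
  | succ N ih =>
    intro j hj
    cases j with
    | zero => simp [gb_zero_right, EtY]
    | succ k =>
      have hEt : EtY Y (k + 1) = EtY Y k * (1 - Y ^ (k + 1)) := Finset.prod_range_succ _ _
      have hdef : gb Y (N + 1) (k + 1) = gb Y N (k + 1) + Y ^ (N - k) * gb Y N k := by rw [gb]
      by_cases hk : k + 1 ≤ N
      · have hA := ih (k + 1) hk
        have hB := ih k (by omega)
        have hA2 : gb Y N (k + 1) * EtY Y (k + 1) =
            (1 - Y ^ (N - k)) * ∏ i ∈ range k, (1 - Y ^ (N - k + i + 1)) := by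
          rw [hA]
          have h1 : ∀ i ∈ range (k + 1),
              (1 - Y ^ (N - (k + 1) + i + 1)) = (1 - Y ^ (N - k + i)) := by
            intro i _
            have he : N - (k + 1) + i + 1 = N - k + i := by omega
            rw [he]
          rw [Finset.prod_congr rfl h1, Finset.prod_range_succ']
          have h2 : ∀ i ∈ range k,
              (1 - Y ^ (N - k + (i + 1))) = (1 - Y ^ (N - k + i + 1)) := by
            intro i _
            have he : N - k + (i + 1) = N - k + i + 1 := by omega
            rw [he]
          rw [Finset.prod_congr rfl h2, add_zero]
          ring
        have hgoal : ∏ i ∈ range (k + 1), (1 - Y ^ (N + 1 - (k + 1) + i + 1)) =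
            (∏ i ∈ range k, (1 - Y ^ (N - k + i + 1))) * (1 - Y ^ (N + 1)) := by
          rw [Finset.prod_range_succ]
          have h1 : ∀ i ∈ range k,
              (1 - Y ^ (N + 1 - (k + 1) + i + 1)) = (1 - Y ^ (N - k + i + 1)) := by
            intro i _
            have he : N + 1 - (k + 1) + i + 1 = N - k + i + 1 := by omega
            rw [he]
          rw [Finset.prod_congr rfl h1]
          have h2 : N + 1 - (k + 1) + k + 1 = N + 1 := by omega
          rw [h2]
        rw [hdef, add_mul, hEt]
        rw [show Y ^ (N - k) * gb Y N k * (EtY Y k * (1 - Y ^ (k + 1))) =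
          Y ^ (N - k) * (1 - Y ^ (k + 1)) * (gb Y N k * EtY Y k) from by ring]
        rw [hB, ← hEt, hA2, hgoal]
        have he : (Y : PowerSeries ℤ) ^ (N - k) * Y ^ (k + 1) = Y ^ (N + 1) := by
          rw [← pow_add]; congr 1; omega
        linear_combination (-(∏ i ∈ range k, (1 - Y ^ (N - k + i + 1)))) * he
      · -- k = N
        have hkN : k = N := by omega
        rw [hkN]
        have hdef' : gb Y (N + 1) (N + 1) = gb Y N (N + 1) + Y ^ (N - N) * gb Y N N := by rw [gb]
        have hEt' : EtY Y (N + 1) = EtY Y N * (1 - Y ^ (N + 1)) := Finset.prod_range_succ _ _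
        rw [hdef', gb_eq_zero Y (by omega), zero_add, Nat.sub_self, pow_zero, one_mul, hEt']
        rw [show gb Y N N * (EtY Y N * (1 - Y ^ (N + 1))) =
          (gb Y N N * EtY Y N) * (1 - Y ^ (N + 1)) from by ring]
        rw [ih N le_rfl]
        rw [show (1 : PowerSeries ℤ) - Y ^ (N + 1) = 1 - Y ^ (N - N + N + 1) from by
          rw [Nat.sub_self, zero_add]]
        rw [← Finset.prod_range_succ (fun i => 1 - Y ^ (N - N + i + 1)) N]
        apply Finset.prod_congr rfl
        intro i _
        have he : N - N + i + 1 = N + 1 - (N + 1) + i + 1 := by omega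
        rw [he]

theorem gb_succ_succ (a b : ℕ) :
    gb Y (a + 1) (b + 1) = gb Y a (b + 1) + Y ^ (a - b) * gb Y a b := by rw [gb]

theorem gb_expand (N j : ℕ) (hj : j ≤ N) :
    gb Y (N + 2) (j + 2) = Y ^ (j + 2) * gb Y N (j + 2) + (1 + Y ^ (N + 1)) * gb Y N (j + 1)
      + Y ^ (N - j) * gb Y N j := by
  have p2 := gb_pascal2 Y (N + 1) (j + 1)
  rw [show N + 1 + 1 = N + 2 from by omega, show j + 1 + 1 = j + 2 from by omega] at p2
  have d1 := gb_succ_succ Y N (j + 1)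
  rw [show j + 1 + 1 = j + 2 from by omega] at d1
  have d2 := gb_succ_succ Y N j
  rw [p2, d1, d2]
  by_cases hj2 : j + 1 ≤ N
  · have he : (Y : PowerSeries ℤ) ^ (j + 2) * Y ^ (N - (j + 1)) = Y ^ (N + 1) := by
      rw [← pow_add]; congr 1; omega
    linear_combination gb Y N (j + 1) * he
  · have hjN : j = N := by omega
    rw [hjN, gb_eq_zero Y (show N < N + 1 from by omega),
      gb_eq_zero Y (show N < N + 2 from by omega)]
    ring

/-- the square exponent -/
def esq (n j : ℕ) : ℕ := (((j : ℤ) - n).natAbs) ^ 2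

theorem esq_cast (n j : ℕ) : ((esq n j : ℕ) : ℤ) = ((j : ℤ) - n) ^ 2 := by
  rw [esq]
  push_cast
  rw [sq_abs]

/-- terms of the finite Gauss sum -/
def gterm (n j : ℕ) : PowerSeries ℤ :=
  (-1 : PowerSeries ℤ) ^ (n + j) * (X ^ (esq n j) * gb (X ^ 2) (2 * n) j)

/-- the finite Gauss sum -/
def Gf (n : ℕ) : PowerSeries ℤ := ∑ j ∈ range (2 * n + 1), gterm n j

theorem gterm_eq_zero {n j : ℕ} (h : 2 * n < j) : gterm n j = 0 := by
  rw [gterm, gb_eq_zero _ h, mul_zero, mul_zero]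

theorem esq_succ_eq (n j : ℕ) : esq (n + 1) (j + 2) = esq n (j + 1) := by
  have h1 := esq_cast (n + 1) (j + 2)
  have h2 := esq_cast n (j + 1)
  have : ((esq (n + 1) (j + 2) : ℕ) : ℤ) = ((esq n (j + 1) : ℕ) : ℤ) := by
    rw [h1, h2]; push_cast; ring
  exact_mod_cast this

theorem gterm_expand (n j : ℕ) (hj : j ≤ 2 * n) :
    gterm (n + 1) (j + 2) = -(X ^ (2 * n + 1)) * gterm n (j + 2)
      + (1 + X ^ (4 * n + 2)) * gterm n (j + 1) - X ^ (2 * n + 1) * gterm n j := by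
  have hexp := gb_expand (X ^ 2 : PowerSeries ℤ) (2 * n) j hj
  rw [show 2 * n + 2 = 2 * (n + 1) from by omega] at hexp
  rw [gterm, gterm, gterm, gterm, hexp, esq_succ_eq]
  rw [← pow_mul (X : PowerSeries ℤ) 2 (j + 2), ← pow_mul (X : PowerSeries ℤ) 2 (2 * n + 1),
    ← pow_mul (X : PowerSeries ℤ) 2 (2 * n - j)]
  have hA : (X : PowerSeries ℤ) ^ (esq n (j + 1)) * X ^ (2 * (j + 2)) =
      X ^ (2 * n + 1) * X ^ (esq n (j + 2)) := by
    rw [← pow_add, ← pow_add]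
    congr 1
    zify
    rw [esq_cast, esq_cast]
    push_cast
    ring
  have hC : (X : PowerSeries ℤ) ^ (esq n (j + 1)) * X ^ (2 * (2 * n - j)) =
      X ^ (2 * n + 1) * X ^ (esq n j) := by
    rw [← pow_add, ← pow_add]
    congr 1
    zify [hj]
    rw [esq_cast, esq_cast]
    push_cast
    ring
  have h2e : 2 * (2 * n + 1) = 4 * n + 2 := by ring
  rw [h2e]
  linear_combination (-((-1 : PowerSeries ℤ) ^ (n + j)) * gb (X ^ 2) (2 * n) (j + 2)) * hA +
    (-((-1 : PowerSeries ℤ) ^ (n + j)) * gb (X ^ 2) (2 * n) j) * hC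

theorem sum_gterm_ext (n : ℕ) :
    ∑ j ∈ range (2 * n + 3), gterm n j = Gf n := by
  rw [show 2 * n + 3 = (2 * n + 2) + 1 from by omega, Finset.sum_range_succ,
    gterm_eq_zero (show 2 * n < 2 * n + 2 from by omega), add_zero,
    show 2 * n + 2 = (2 * n + 1) + 1 from by omega, Finset.sum_range_succ,
    gterm_eq_zero (show 2 * n < 2 * n + 1 from by omega), add_zero, Gf]

theorem sum_gterm_ext1 (n : ℕ) :
    ∑ j ∈ range (2 * n + 2), gterm n j = Gf n := by
  rw [show 2 * n + 2 = (2 * n + 1) + 1 from by omega, Finset.sum_range_succ,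
    gterm_eq_zero (show 2 * n < 2 * n + 1 from by omega), add_zero, Gf]

theorem hS1 (n : ℕ) :
    ∑ j ∈ range (2 * n + 1), gterm n (j + 1) = Gf n - gterm n 0 := by
  have h := sum_gterm_ext1 n
  rw [show 2 * n + 2 = (2 * n + 1) + 1 from by omega, Finset.sum_range_succ'] at h
  linear_combination h

theorem hS2 (n : ℕ) :
    ∑ j ∈ range (2 * n + 1), gterm n (j + 2) = Gf n - gterm n 0 - gterm n 1 := by
  have h := sum_gterm_ext n
  rw [show 2 * n + 3 = (2 * n + 2) + 1 from by omega, Finset.sum_range_succ',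
    show 2 * n + 2 = (2 * n + 1) + 1 from by omega, Finset.sum_range_succ'] at h
  have h2 : ∀ j ∈ range (2 * n + 1), gterm n (j + 1 + 1) = gterm n (j + 2) := by
    intro j _
    rw [show j + 1 + 1 = j + 2 from by omega]
  rw [Finset.sum_congr rfl h2, show (0 : ℕ) + 1 = 1 from by omega] at h
  linear_combination h

theorem Gf_succ (n : ℕ) : Gf (n + 1) = (1 - X ^ (2 * n + 1)) ^ 2 * Gf n := by
  have key : Gf (n + 1) = (∑ j ∈ range (2 * n + 1), gterm (n + 1) (j + 2))
      + gterm (n + 1) 1 + gterm (n + 1) 0 := by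
    rw [Gf, show 2 * (n + 1) + 1 = (2 * n + 2) + 1 from by omega, Finset.sum_range_succ',
      show 2 * n + 2 = (2 * n + 1) + 1 from by omega, Finset.sum_range_succ']
    try rw [Finset.sum_congr rfl
      (show ∀ j ∈ range (2 * n + 1), gterm (n + 1) (j + 1 + 1) = gterm (n + 1) (j + 2) from
        fun j _ => by norm_num)]
    try norm_num
  have hsum : ∑ j ∈ range (2 * n + 1), gterm (n + 1) (j + 2) =
      -(X ^ (2 * n + 1)) * (∑ j ∈ range (2 * n + 1), gterm n (j + 2))
      + (1 + X ^ (4 * n + 2)) * (∑ j ∈ range (2 * n + 1), gterm n (j + 1))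
      - X ^ (2 * n + 1) * (∑ j ∈ range (2 * n + 1), gterm n j) := by
    rw [Finset.mul_sum, Finset.mul_sum, Finset.mul_sum, ← Finset.sum_add_distrib,
      ← Finset.sum_sub_distrib]
    apply Finset.sum_congr rfl
    intro j hj
    rw [Finset.mem_range] at hj
    exact gterm_expand n j (by omega)
  have hY : (1 : PowerSeries ℤ) - X ^ 2 ≠ 0 := by
    intro h
    have := congr_arg (PowerSeries.constantCoeff) h
    simp at this
  -- explicit small terms
  have hf0 : gterm (n + 1) 0 = (-1 : PowerSeries ℤ) ^ (n + 1) * X ^ (esq (n + 1) 0) := by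
    rw [gterm, gb_zero_right, mul_one, add_zero]
  have hg0 : gterm n 0 = (-1 : PowerSeries ℤ) ^ n * X ^ (esq n 0) := by
    rw [gterm, gb_zero_right, mul_one, add_zero]
  have hBexp : gb (X ^ 2 : PowerSeries ℤ) (2 * (n + 1)) 1 =
      1 + X ^ 2 * gb (X ^ 2) (2 * n) 1 + (X ^ 2) ^ (2 * n + 1) := by
    rw [show 2 * (n + 1) = 2 * n + 2 from by omega]
    exact gb_one_expand _ hY _
  have hf1 : gterm (n + 1) 1 = (-1 : PowerSeries ℤ) ^ (n + 1 + 1) *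
      (X ^ (esq (n + 1) 1) * (1 + X ^ 2 * gb (X ^ 2) (2 * n) 1 + (X ^ 2) ^ (2 * n + 1))) := by
    rw [gterm, hBexp]
  have hg1 : gterm n 1 = (-1 : PowerSeries ℤ) ^ (n + 1) *
      (X ^ (esq n 1) * gb (X ^ 2) (2 * n) 1) := by
    rw [gterm]
  -- exponent identities
  have p0 : (X : PowerSeries ℤ) ^ (esq (n + 1) 0) = X ^ (2 * n + 1) * X ^ (esq n 0) := by
    rw [← pow_add]
    congr 1
    zify
    rw [esq_cast, esq_cast]
    push_cast
    ring
  have p1 : (X : PowerSeries ℤ) ^ (esq (n + 1) 1) = X ^ (esq n 0) := by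
    congr 1
    zify
    rw [esq_cast, esq_cast]
    push_cast
    ring
  have p2 : (X : PowerSeries ℤ) ^ (2 * n + 1) * X ^ (esq n 1) = X ^ 2 * X ^ (esq n 0) := by
    rw [← pow_add, ← pow_add]
    congr 1
    zify
    rw [esq_cast, esq_cast]
    push_cast
    ring
  have p3 : ((X : PowerSeries ℤ) ^ 2) ^ (2 * n + 1) = X ^ (4 * n + 2) := by
    rw [← pow_mul]
    congr 1
    ring
  have hGf : ∑ j ∈ range (2 * n + 1), gterm n j = Gf n := rfl
  rw [key, hsum, hS1, hS2, hGf, hf0, hf1, hg0, hg1, p0, p1, p3]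
  linear_combination ((-1 : PowerSeries ℤ) ^ (n + 1) * gb (X ^ 2) (2 * n) 1) * p2

def Od (n : ℕ) : PowerSeries ℤ := ∏ i ∈ range n, (1 - X ^ (2 * i + 1))

theorem Gf_zero : Gf 0 = 1 := by
  rw [Gf]
  norm_num
  rw [gterm, esq, gb]
  norm_num

theorem Gf_eq (n : ℕ) : Gf n = Od n ^ 2 := by
  induction n with
  | zero => rw [Gf_zero, Od]; norm_num
  | succ n ih =>
    rw [Gf_succ, ih]
    conv_rhs => rw [Od, Finset.prod_range_succ]
    rw [← Od]
    ring

theorem Od_mul_Ep (n : ℕ) : Od n * Ep n = Fp (2 * n) := by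
  induction n with
  | zero =>
    rw [Od, Ep, Fp]
    try norm_num
  | succ n ih =>
    rw [Od, Ep, Finset.prod_range_succ, Finset.prod_range_succ, ← Od, ← Ep,
      show 2 * (n + 1) = (2 * n + 1) + 1 from by omega, Fp, Finset.prod_range_succ,
      Finset.prod_range_succ, ← Fp, ← ih]
    rw [show 2 * n + 1 + 1 = 2 * (n + 1) from by omega]
    ring

theorem ME.one_sub_pow {M a : ℕ} (h : M ≤ a) : ME M (1 - (X : PowerSeries ℤ) ^ a) 1 := by
  rw [ME]
  simp only [sub_sub_cancel_left]
  exact (pow_dvd_pow _ h).neg_right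

theorem ME.sum {M : ℕ} {ι : Type*} (s : Finset ι) (f g : ι → PowerSeries ℤ)
    (h : ∀ i ∈ s, ME M (f i) (g i)) : ME M (∑ i ∈ s, f i) (∑ i ∈ s, g i) := by
  rw [ME, ← Finset.sum_sub_distrib]
  exact Finset.dvd_sum h

/-- main congruence: gb * Ep is close to 1 -/
theorem gb_Ep_ME (n j : ℕ) (hj : j ≤ 2 * n) :
    ME (2 * (min j (2 * n - j)) + 2) (gb (X ^ 2) (2 * n) j * Ep n) 1 := by
  set K := 2 * (min j (2 * n - j)) + 2 with hK
  have hprodW : ME K (∏ i ∈ range j, (1 - ((X : PowerSeries ℤ) ^ 2) ^ (2 * n - j + i + 1))) 1 := by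
    apply ME.prod_one
    intro i _
    rw [← pow_mul]
    exact ME.one_sub_pow (by omega)
  have hEt : ∀ m, EtY ((X : PowerSeries ℤ) ^ 2) m = Ep m := by
    intro m
    rw [EtY, Ep]
    apply Finset.prod_congr rfl
    intro i _
    rw [← pow_mul]
  by_cases hjn : j ≤ n
  · -- Ep n = EtY j * rest
    have hsplit : EtY ((X : PowerSeries ℤ) ^ 2) j *
        (∏ i ∈ range (n - j), (1 - ((X : PowerSeries ℤ) ^ 2) ^ (j + i + 1))) = Ep n := by
      rw [EtY, ← Finset.prod_range_add, show j + (n - j) = n from by omega, ← hEt n, EtY]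
    have hR : ME K (∏ i ∈ range (n - j), (1 - ((X : PowerSeries ℤ) ^ 2) ^ (j + i + 1))) 1 := by
      apply ME.prod_one
      intro i _
      rw [← pow_mul]
      exact ME.one_sub_pow (by omega)
    have hcalc : gb (X ^ 2) (2 * n) j * Ep n =
        (∏ i ∈ range j, (1 - ((X : PowerSeries ℤ) ^ 2) ^ (2 * n - j + i + 1))) *
          ∏ i ∈ range (n - j), (1 - ((X : PowerSeries ℤ) ^ 2) ^ (j + i + 1)) := by
      rw [← hsplit, ← mul_assoc, gb_mul_EtY _ _ _ hj]
    rw [hcalc]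
    have := hprodW.mul hR
    rwa [mul_one] at this
  · -- j > n : EtY j = Ep n * R'
    have hsplit : EtY ((X : PowerSeries ℤ) ^ 2) n *
        (∏ i ∈ range (j - n), (1 - ((X : PowerSeries ℤ) ^ 2) ^ (n + i + 1))) =
          EtY ((X : PowerSeries ℤ) ^ 2) j := by
      rw [EtY, ← Finset.prod_range_add, show n + (j - n) = j from by omega]
      rfl
    have hR : ME K (∏ i ∈ range (j - n), (1 - ((X : PowerSeries ℤ) ^ 2) ^ (n + i + 1))) 1 := by
      apply ME.prod_one
      intro i _
      rw [← pow_mul]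
      exact ME.one_sub_pow (by omega)
    have h1 : ME K (gb (X ^ 2) (2 * n) j * Ep n *
        ∏ i ∈ range (j - n), (1 - ((X : PowerSeries ℤ) ^ 2) ^ (n + i + 1))) 1 := by
      rw [← hEt n, mul_assoc, hsplit, gb_mul_EtY _ _ _ hj]
      exact hprodW
    have h2 : ME K (gb (X ^ 2) (2 * n) j * Ep n)
        (gb (X ^ 2) (2 * n) j * Ep n *
          ∏ i ∈ range (j - n), (1 - ((X : PowerSeries ℤ) ^ 2) ^ (n + i + 1))) := by
      have := (ME.refl K (gb (X ^ 2) (2 * n) j * Ep n)).mul hR.symm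
      rwa [mul_one] at this
    exact h2.trans h1

theorem ME.X_pow_mul {K : ℕ} {A B : PowerSeries ℤ} (a : ℕ) (h : ME K A B) :
    ME (a + K) ((X : PowerSeries ℤ) ^ a * A) (X ^ a * B) := by
  rw [ME, ← mul_sub, pow_add]
  exact mul_dvd_mul_left _ h

/-- the truncated theta sum -/
def Th (n : ℕ) : PowerSeries ℤ :=
  ∑ j ∈ range (2 * n + 1), (-1 : PowerSeries ℤ) ^ (n + j) * X ^ (esq n j)

theorem esq_le (n j : ℕ) (hjn : j ≤ n) : esq n j = (n - j) ^ 2 := by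
  zify [hjn]
  rw [esq_cast]
  ring

theorem esq_ge (n j : ℕ) (hjn : n ≤ j) : esq n j = (j - n) ^ 2 := by
  zify [hjn]
  rw [esq_cast]

theorem Gf_Ep_ME (n : ℕ) : ME (2 * n + 1) (Gf n * Ep n) (Th n) := by
  rw [Gf, Finset.sum_mul, Th]
  apply ME.sum
  intro j hj
  rw [Finset.mem_range] at hj
  have hj2 : j ≤ 2 * n := by omega
  have hcore := gb_Ep_ME n j hj2
  have hX := ME.X_pow_mul (esq n j) hcore
  rw [mul_one] at hX
  have hmul := (ME.refl (esq n j + (2 * (min j (2 * n - j)) + 2))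
    ((-1 : PowerSeries ℤ) ^ (n + j))).mul hX
  have harr : (-1 : PowerSeries ℤ) ^ (n + j) * (X ^ (esq n j) * (gb (X ^ 2) (2 * n) j * Ep n)) =
      gterm n j * Ep n := by
    rw [gterm]; ring
  rw [harr] at hmul
  apply hmul.mono
  -- 2*n+1 ≤ esq n j + (2 * min j (2*n-j) + 2)
  by_cases hjn : j ≤ n
  · rw [esq_le n j hjn, min_eq_left (by omega : j ≤ 2 * n - j)]
    zify [hjn]
    nlinarith [sq_nonneg ((n : ℤ) - j - 1)]
  · rw [esq_ge n j (by omega), min_eq_right (by omega : 2 * n - j ≤ j)]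
    zify [hj2, show n ≤ j from by omega]
    nlinarith [sq_nonneg ((j : ℤ) - n - 1)]

theorem esq_eq_sq_iff (n j k : ℕ) (hk : k ≤ n) :
    esq n j = k ^ 2 ↔ (j = n - k ∨ j = n + k) := by
  constructor
  · intro h
    have hcast : ((j : ℤ) - n) ^ 2 = (k : ℤ) ^ 2 := by
      rw [← esq_cast, h]; push_cast; ring
    have hfac : ((j : ℤ) - n - k) * ((j : ℤ) - n + k) = 0 := by linear_combination hcast
    rcases mul_eq_zero.mp hfac with h' | h' <;> omega
  · intro h
    rcases h with rfl | rfl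
    · rw [esq_le n _ (by omega)]
      congr 1
      omega
    · rw [esq_ge n _ (by omega)]
      congr 1
      omega

theorem theta_ME (n : ℕ) : ME (n + 1) thetaAlt (Th n) := by
  apply ME.of_coeff
  intro m hm
  rw [thetaAlt, coeff_mk, Th, map_sum]
  have hterm : ∀ j ∈ range (2 * n + 1),
      PowerSeries.coeff m ((-1 : PowerSeries ℤ) ^ (n + j) * X ^ (esq n j)) =
        if esq n j = m then (-1 : ℤ) ^ (n + j) else 0 := by
    intro j _
    rw [show ((-1 : PowerSeries ℤ) ^ (n + j)) = PowerSeries.C ((-1 : ℤ) ^ (n + j)) from by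
      rw [map_pow, map_neg, map_one], PowerSeries.coeff_C_mul, PowerSeries.coeff_X_pow]
    split_ifs with h1 h2 h2
    · ring
    · exact absurd h1.symm h2
    · exact absurd h2.symm h1
    · ring
  rw [Finset.sum_congr rfl hterm, ← Finset.sum_filter]
  by_cases hm0 : m = 0
  · subst hm0
    rw [if_pos rfl]
    have hfil : (range (2 * n + 1)).filter (fun j => esq n j = 0) = {n} := by
      ext j
      simp only [Finset.mem_filter, Finset.mem_range, Finset.mem_singleton]
      rw [show (0 : ℕ) = 0 ^ 2 from by norm_num, esq_eq_sq_iff n j 0 (by omega)]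
      omega
    rw [hfil, Finset.sum_singleton, show n + n = 2 * n from by omega, pow_mul]
    norm_num
  · rw [if_neg hm0]
    by_cases hsq : Nat.sqrt m ^ 2 = m
    · rw [if_pos hsq]
      set k := Nat.sqrt m with hkdef
      have hk1 : 1 ≤ k := by
        rcases Nat.eq_zero_or_pos k with h | h
        · rw [h] at hsq; simp at hsq; omega
        · omega
      have hkn : k ≤ n := by
        have : k ≤ k ^ 2 := by nlinarith
        omega
      have hfil : (range (2 * n + 1)).filter (fun j => esq n j = m) = {n - k, n + k} := by
        ext j
        simp only [Finset.mem_filter, Finset.mem_range, Finset.mem_insert, Finset.mem_singleton]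
        rw [← hsq, esq_eq_sq_iff n j k hkn]
        omega
      have hne : n - k ≠ n + k := by omega
      rw [hfil, Finset.sum_pair hne]
      have s1 : (-1 : ℤ) ^ (n + (n - k)) = (-1 : ℤ) ^ k := by
        rw [show n + (n - k) = 2 * (n - k) + k from by omega, pow_add, pow_mul]
        norm_num
      have s2 : (-1 : ℤ) ^ (n + (n + k)) = (-1 : ℤ) ^ k := by
        rw [show n + (n + k) = 2 * n + k from by omega, pow_add, pow_mul]
        norm_num
      rw [s1, s2]
      ring
    · rw [if_neg hsq]
      have hfil : (range (2 * n + 1)).filter (fun j => esq n j = m) = ∅ := by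
        ext j
        simp only [Finset.mem_filter, Finset.mem_range, Finset.notMem_empty, iff_false,
          not_and]
        intro _
        intro hesq
        apply hsq
        have : m = (((j : ℤ) - n).natAbs) ^ 2 := by rw [← hesq, esq]
        rw [this, pow_two, Nat.sqrt_eq', ← pow_two]
      rw [hfil, Finset.sum_empty]

end GaussAux

open GaussAux

/-- `(∑_{n ≥ 0} p₂(n) zⁿ) · (∑_{k ∈ ℤ} (-1)^k z^(k²)) = ∑_{n ≥ 0} p(n) z^(2n)` as formal
power series in `z`: the right-hand side is the series whose `m`-th coefficient is `p(m/2)`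
for even `m` and `0` for odd `m`. -/
theorem bipartition_series_mul_thetaAlt :
    (PowerSeries.mk fun n => (bipartitionNumber n : ℤ)) * thetaAlt =
      PowerSeries.mk fun m => if 2 ∣ m then (partitionNumber (m / 2) : ℤ) else 0 := by
  rw [GaussAux.bipart_series_eq, GaussAux.rhs_eq_dbl_Sp]
  ext m
  set M := m + 1 with hM
  set n := m + 1 with hn
  have h₁ : ME M thetaAlt (Th n) := (theta_ME n).mono (by omega)
  have h₂ : ME M (Gf n * Ep n) (Th n) := (Gf_Ep_ME n).mono (by omega)
  have hθ : ME M thetaAlt (Gf n * Ep n) := h₁.trans h₂.symm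
  have hS : ME M Sp (Pp (2 * n)) := (Sp_ME_Pp (2 * n)).mono (by omega)
  have hL : ME M (Sp * Sp * thetaAlt * Ep n)
      (Pp (2 * n) * Pp (2 * n) * (Gf n * Ep n) * Ep n) :=
    ((hS.mul hS).mul hθ).mul (ME.refl M (Ep n))
  have hone : Pp (2 * n) * Pp (2 * n) * (Gf n * Ep n) * Ep n = 1 := by
    rw [Gf_eq]
    have h := Od_mul_Ep n
    calc Pp (2 * n) * Pp (2 * n) * (Od n ^ 2 * Ep n) * Ep n
        = (Od n * Ep n) * (Od n * Ep n) * (Pp (2 * n) * Pp (2 * n)) := by ring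
      _ = (Fp (2 * n) * Pp (2 * n)) * (Fp (2 * n) * Pp (2 * n)) := by rw [h]; ring
      _ = 1 := by rw [Fp_mul_Pp]; ring
  rw [hone] at hL
  have hR : ME M (dbl Sp * Ep n) 1 := (dblSp_mul_Ep n).mono (by omega)
  have hfin : ME M (Sp * Sp * thetaAlt) (dbl Sp) :=
    ME.cancel_unit (isUnit_Ep n) (hL.trans hR.symm)
  exact hfin.coeff_eq (by omega)

end
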